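/- Let f be a homeomorphism of a compact metric space X, M a connected minimal set for f, and U a periodic connected component of X \ M of period p. Define r(x) = #{0 ≤ k < p : x ∈ ∂f^k(U)} for x ∈ M. Then r is constant on M. -/

import Mathlib

open Topology Set

def IsMinimalSet {X : Type*} [TopologicalSpace X] (f : X ≃ₜ X) (M : Set X) : Prop :=
  M.Nonempty ∧ IsClosed M ∧ f '' M = M ∧
    ∀ x ∈ M, closure (Set.range fun n : ℤ => (f.toEquiv ^ n) x) = M

/-- For a connected minimal set M and a periodic complementary component U of period p,
the function counting in how many of the boundaries of the iterates of U a point lies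
is constant on M. -/
theorem stmt3 {X : Type*} [MetricSpace X] [CompactSpace X] (f : X ≃ₜ X)
    (M : Set X) (hM : IsMinimalSet f M) (hMconn : IsConnected M)
    (U : Set X) (hU : ∃ x ∈ Mᶜ, U = connectedComponentIn Mᶜ x)
    (p : ℕ) (hp : 1 ≤ p) (hper : (⇑f)^[p] '' U = U) :
    ∀ x ∈ M, ∀ y ∈ M,
      {k : ℕ | k < p ∧ x ∈ frontier ((⇑f)^[k] '' U)}.ncard =
        {k : ℕ | k < p ∧ y ∈ frontier ((⇑f)^[k] '' U)}.ncard := by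
  classical
  obtain ⟨-, hMcl, -, hMmin⟩ := hM
  set g : ℕ → Set X := fun k => (⇑f)^[k] '' U with hg
  have hgsucc : ∀ k, g (k + 1) = f '' g k := by
    intro k
    show (⇑f)^[k + 1] '' U = f '' ((⇑f)^[k] '' U)
    rw [Function.iterate_succ', Set.image_comp]
  have hperiod : ∀ k, g (k + p) = g k := by
    intro k
    simp only [hg]
    rw [Function.iterate_add, Set.image_comp, hper]
  have hmod : ∀ k, g (k % p) = g k := by
    intro k
    induction k using Nat.strong_induction_on with
    | _ k ih =>
      rcases lt_or_ge k p with h | h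
      · rw [Nat.mod_eq_of_lt h]
      · have hk : k - p + p = k := Nat.sub_add_cancel h
        rw [Nat.mod_eq_sub_mod h, ih (k - p) (by omega), ← hperiod (k - p), hk]
  have hshift : ∀ (z : X) (k : ℕ), z ∈ frontier (g k) ↔ f z ∈ frontier (g ((k + 1) % p)) := by
    intro z k
    rw [hmod, hgsucc, ← Homeomorph.image_frontier]
    exact (f.injective.mem_set_image).symm
  have harithA : ∀ k, k < p → ((k + (p - 1)) % p + 1) % p = k := by
    intro k hk
    rw [Nat.mod_add_mod, show k + (p - 1) + 1 = k + p by omega, Nat.add_mod_right,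
      Nat.mod_eq_of_lt hk]
  have harithB : ∀ k, k < p → ((k + 1) % p + (p - 1)) % p = k := by
    intro k hk
    rw [Nat.mod_add_mod, show k + 1 + (p - 1) = k + p by omega, Nat.add_mod_right,
      Nat.mod_eq_of_lt hk]
  set K : X → Finset ℕ := fun z => (Finset.range p).filter (fun k => z ∈ frontier (g k))
    with hKdef
  have hmemK : ∀ z k, k ∈ K z ↔ k < p ∧ z ∈ frontier (g k) := by
    intro z k; simp [hKdef, Finset.mem_filter, Finset.mem_range]
  have hcard : ∀ z, {k : ℕ | k < p ∧ z ∈ frontier (g k)}.ncard = (K z).card := by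
    intro z
    rw [show {k : ℕ | k < p ∧ z ∈ frontier (g k)} = ↑(K z) by ext k; simp [hmemK],
      Set.ncard_coe_finset]
  have step : ∀ z : X, (K z).card = (K (f z)).card := by
    intro z
    refine Finset.card_nbij' (fun k => (k + 1) % p) (fun k => (k + (p - 1)) % p) ?_ ?_ ?_ ?_
    · intro k hk
      rw [Finset.mem_coe, hmemK] at hk ⊢
      exact ⟨Nat.mod_lt _ (by omega), (hshift z k).mp hk.2⟩
    · intro k hk
      rw [Finset.mem_coe, hmemK] at hk ⊢
      refine ⟨Nat.mod_lt _ (by omega), ?_⟩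
      rw [hshift z _, harithA k hk.1]
      exact hk.2
    · intro k hk
      rw [Finset.mem_coe, hmemK] at hk
      exact harithB k hk.1
    · intro k hk
      rw [Finset.mem_coe, hmemK] at hk
      exact harithA k hk.1
  have stepinv : ∀ z : X, (K z).card = (K (f.symm z)).card := by
    intro z
    have := step (f.symm z)
    rw [Homeomorph.apply_symm_apply] at this
    exact this.symm
  have orbit : ∀ y : X, ∀ n : ℤ, (K ((f.toEquiv ^ n) y)).card = (K y).card := by
    intro y n
    induction n using Int.induction_on with
    | zero => simp
    | succ n ih =>
      have : (f.toEquiv ^ ((n : ℤ) + 1)) y = f ((f.toEquiv ^ (n : ℤ)) y) := by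
        rw [add_comm, zpow_add, zpow_one]
        rfl
      rw [this, ← step, ih]
    | pred n ih =>
      have : (f.toEquiv ^ (-(n : ℤ) - 1)) y = f.symm ((f.toEquiv ^ (-(n : ℤ))) y) := by
        rw [sub_eq_add_neg, add_comm, zpow_add, zpow_neg, zpow_one]
        rfl
      rw [this, ← stepinv, ih]
  -- main inequality
  have main : ∀ x ∈ M, ∀ y ∈ M, (K y).card ≤ (K x).card := by
    intro x hx y hy
    set m := (K y).card with hm
    set D : Set X :=
      ⋃ A ∈ ((Finset.range p).powerset.filter fun A => A.card = m),
        ⋂ k ∈ (A : Finset ℕ), frontier (g k) with hD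
    have hDclosed : IsClosed D := by
      refine isClosed_biUnion_finset fun A _ => ?_
      exact isClosed_biInter fun k _ => isClosed_frontier
    have horbD : Set.range (fun n : ℤ => (f.toEquiv ^ n) y) ⊆ D := by
      rintro _ ⟨n, rfl⟩
      refine Set.mem_iUnion₂.mpr ⟨K ((f.toEquiv ^ n) y), ?_, ?_⟩
      · rw [Finset.mem_filter, Finset.mem_powerset]
        exact ⟨Finset.filter_subset _ _, orbit y n⟩
      · exact Set.mem_iInter₂.mpr fun k hk => ((hmemK _ k).mp hk).2
    have hxD : x ∈ D := by
      have : x ∈ closure (Set.range fun n : ℤ => (f.toEquiv ^ n) y) := by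
        rw [hMmin y hy]; exact hx
      exact hDclosed.closure_subset ((closure_mono horbD).trans
        (by rw [hDclosed.closure_eq]) this)
    obtain ⟨A, hA, hxA⟩ := Set.mem_iUnion₂.mp hxD
    rw [Finset.mem_filter, Finset.mem_powerset] at hA
    have hsub : A ⊆ K x := by
      intro k hk
      rw [hmemK]
      exact ⟨Finset.mem_range.mp (hA.1 hk), Set.mem_iInter₂.mp hxA k hk⟩
    calc (K y).card = A.card := hA.2.symm
      _ ≤ (K x).card := Finset.card_le_card hsub
  intro x hx y hy
  rw [hcard, hcard]
  exact le_antisymm (main y hy x hx) (main x hx y hy)
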